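/- With the notation of the context, let m be a Motzkin path and 1 ≤ i ≤ r−1 a mutation site satisfying case (i) or case (ii), and let m' and y' be the mutated Motzkin path and weights. Assume (genericity) that every element of K inverted in forming ŷ(m), ŷ(m') (the latter built from y'), y', and in the recursive evaluation of J^{(r)}(ŷ(m)) and J^{(r)}(ŷ(m')) is nonzero. Then: if i ≥ 2, J^{(r)}(ŷ(m)) = J^{(r)}(ŷ(m')); and if i = 1, J^{(r)}(ŷ(m)) = 1 + t·y'_1·J^{(r)}(ŷ(m')). Consequently, setting F_m(t) = 1 + t·y_1·J^{(r)}(ŷ(m)) and F_{m'}(t) = 1 + t·y'_1·J^{(r)}(ŷ(m')), one has F_m(t) = F_{m'}(t) for i ≥ 2, and F_m(t) = 1 + t·y_1·F_{m'}(t) for i = 1. -/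

import Mathlib

/-- The Jacobi-type finite continued fraction `J^{(r)}(x_1,…,x_{2r+1})`, consuming the
`2r+1` variables `x_1,…,x_{2r+1}` and bottoming out at `1/(1 - x_{2r+1})`:
`Jfrac 0 x = 1/(1 - x 1)` and `Jfrac (k+1) x = 1/(1 - x 1 - x 2 * Jfrac k (x ∘ (·+2)))`,
so that `Jfrac r x = J^{(r)}(x_1,…,x_{2r+1})`. -/
def Jfrac {K : Type*} [Field K] : ℕ → (ℕ → K) → K
  | 0, x => 1 / (1 - x 1)
  | (k+1), x => 1 / (1 - x 1 - x 2 * Jfrac k (fun i => x (i + 2)))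

/-- Genericity of the continued fraction: all denominators appearing in the recursive
evaluation of `Jfrac` are nonzero. -/
def JfracGen {K : Type*} [Field K] : ℕ → (ℕ → K) → Prop
  | 0, x => 1 - x 1 ≠ 0
  | (k+1), x => (1 - x 1 - x 2 * Jfrac k (fun i => x (i + 2)) ≠ 0) ∧
      JfracGen k (fun i => x (i + 2))

/-- The hatted weights `ŷ(m)` attached to a Motzkin path `m` and weights `y₁,…,y_{2r+1}`:
for `1 ≤ u ≤ r-1`,
`ŷ_{2u} = t·y_{2u}·(t·y_{2u+1})^{m_{u+1}-m_u}`, and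
`ŷ_{2u-1} = t·y_{2u-1} - y_{2u}/y_{2u+1}` if `m_{u+1} = m_u - 1`,
`ŷ_{2u-1} = t·(y_{2u-1} + y_{2u})` if `m_{u+1} = m_u + 1`, `ŷ_{2u-1} = t·y_{2u-1}` otherwise;
while `ŷ_j = t·y_j` for `j ≥ 2r-1`. -/
def yhat {K : Type*} [Field K] (r : ℕ) (t : K) (y : ℕ → K) (m : ℕ → ℤ) : ℕ → K :=
  fun j =>
    if j % 2 = 1 then
      if (j + 1) / 2 + 1 ≤ r then
        if m ((j + 1) / 2 + 1) = m ((j + 1) / 2) - 1 then t * y j - y (j + 1) / y (j + 2)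
        else if m ((j + 1) / 2 + 1) = m ((j + 1) / 2) + 1 then t * (y j + y (j + 1))
        else t * y j
      else t * y j
    else
      if j / 2 + 1 ≤ r then
        t * y j * (t * y (j + 1)) ^ (m (j / 2 + 1) - m (j / 2))
      else t * y j


section Helpers
variable {K : Type*} [Field K]

lemma Jfrac_succ (n : ℕ) (x : ℕ → K) :
    Jfrac (n+1) x = 1 / (1 - x 1 - x 2 * Jfrac n (fun i => x (i + 2))) := rfl

lemma Jfrac_congr : ∀ (n : ℕ) (x x' : ℕ → K),
    (∀ j, 1 ≤ j → j ≤ 2*n+1 → x j = x' j) → Jfrac n x = Jfrac n x'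
  | 0, x, x', h => by simp [Jfrac, h 1 (by omega) (by omega)]
  | (n+1), x, x', h => by
      rw [Jfrac_succ, Jfrac_succ, h 1 (by omega) (by omega), h 2 (by omega) (by omega),
        Jfrac_congr n (fun i => x (i+2)) (fun i => x' (i+2))
          (fun j h1 h2 => h (j+2) (by omega) (by omega))]

lemma JfracGen_tail : ∀ (k n : ℕ) (x : ℕ → K), JfracGen (k+n) x →
    JfracGen n (fun j => x (j + 2*k))
  | 0, n, x, h => by
      have : (fun j => x (j + 2*0)) = x := by funext j; congr 1 <;> omega
      rw [this]; simpa using h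
  | (k+1), n, x, h => by
      rw [show k+1+n = (k+n)+1 from by omega] at h
      have h2 := h.2
      have := JfracGen_tail k n (fun j => x (j+2)) h2
      have e : (fun j => (fun j' => x (j'+2)) (j + 2*k)) = (fun j => x (j + 2*(k+1))) := by
        funext j; congr 1 <;> omega
      rwa [e] at this

lemma Jfrac_peel : ∀ (k n : ℕ) (x x' : ℕ → K),
    (∀ j, 1 ≤ j → j ≤ 2*k → x j = x' j) →
    Jfrac n (fun j => x (j + 2*k)) = Jfrac n (fun j => x' (j + 2*k)) →
    Jfrac (k+n) x = Jfrac (k+n) x'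
  | 0, n, x, x', h, ht => by
      rw [show (0+n) = n from by omega]
      have e : ∀ (f : ℕ → K), (fun j => f (j + 2*0)) = f := by
        intro f; funext j; congr 1 <;> omega
      rwa [e, e] at ht
  | (k+1), n, x, x', h, ht => by
      rw [show k+1+n = (k+n)+1 from by omega, Jfrac_succ, Jfrac_succ,
        h 1 (by omega) (by omega), h 2 (by omega) (by omega)]
      have e : ∀ (f : ℕ → K), (fun j => (fun j' => f (j'+2)) (j + 2*k))
          = (fun j => f (j + 2*(k+1))) := by intro f; funext j; congr 1 <;> omega
      have := Jfrac_peel k n (fun j => x (j+2)) (fun j => x' (j+2))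
        (fun j h1 h2 => h (j+2) (by omega) (by omega)) (by rw [e, e]; exact ht)
      rw [this]

lemma core_i (t a b c u v W : K) (hab : a + b ≠ 0)
    (d1 : 1 - u - v*W ≠ 0)
    (d2 : 1 - (u - t*c*b/(a+b)) - v*W ≠ 0)
    (d3 : 1 - t*(a+b) - t*b*(t*c)*(1/(1 - u - v*W)) ≠ 0)
    (d4 : 1 - t*(a+b) - t*(c*b/(a+b))*(1/(1 - (u - t*c*b/(a+b)) - v*W)) ≠ 0) :
    1/(1 - t*(a+b) - t*b*(t*c)*(1/(1 - u - v*W)))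
      = 1 + t*(a+b)*(1/(1 - t*(a+b) - t*(c*b/(a+b))*(1/(1 - (u - t*c*b/(a+b)) - v*W)))) := by
  have e2 : 1 - (u - t*c*b/(a+b)) - v*W = ((a+b)*(1 - u - v*W) + t*c*b)/(a+b) := by
    field_simp; ring
  rw [e2] at d2 d4 ⊢
  generalize hd : 1 - u - v*W = d at d1 d2 d3 d4 ⊢
  have hE2 : (a+b)*d + t*c*b ≠ 0 := by
    intro h; apply d2; rw [h]; simp
  have e3 : 1 - t*(a+b) - t*b*(t*c)*(1/d) = ((1 - t*(a+b))*d - t*b*(t*c))/d := by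
    field_simp
  have e4 : 1 - t*(a+b) - t*(c*b/(a+b))*(1/(((a+b)*d + t*c*b)/(a+b)))
      = ((1 - t*(a+b))*((a+b)*d + t*c*b) - t*c*b)/((a+b)*d + t*c*b) := by
    rw [one_div_div]
    generalize (a+b)*d + t*c*b = E at hE2 ⊢
    field_simp
  rw [e3] at d3 ⊢
  rw [e4] at d4 ⊢
  have hN := (div_ne_zero_iff.mp d3).1
  have hM := (div_ne_zero_iff.mp d4).1
  rw [one_div_div, one_div_div]
  rw [show (1:K) + t*(a+b)*(((a+b)*d + t*c*b)/((1 - t*(a+b))*((a+b)*d + t*c*b) - t*c*b))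
      = ((1 - t*(a+b))*((a+b)*d + t*c*b) - t*c*b + t*(a+b)*((a+b)*d + t*c*b))
        /((1 - t*(a+b))*((a+b)*d + t*c*b) - t*c*b) from by rw [add_div ((1 - t*(a+b))*((a+b)*d + t*c*b) - t*c*b) _ _, div_self hM]; ring]
  rw [div_eq_div_iff hN hM]
  ring

lemma core_ii (t a b u v W : K) (ha : a ≠ 0) (hab : a + b ≠ 0)
    (d1 : 1 - u - v*W ≠ 0)
    (d2 : 1 - a/(a+b)*u - a/(a+b)*v*W ≠ 0)
    (d3 : 1 - t*a - t*b*(1/(1 - u - v*W)) ≠ 0)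
    (d4 : 1 - (t*(a+b) - b/a) - b/a*(1/(1 - a/(a+b)*u - a/(a+b)*v*W)) ≠ 0) :
    1/(1 - t*a - t*b*(1/(1 - u - v*W)))
      = 1 + t*(a+b)*(1/(1 - (t*(a+b) - b/a) - b/a*(1/(1 - a/(a+b)*u - a/(a+b)*v*W)))) := by
  have e2 : 1 - a/(a+b)*u - a/(a+b)*v*W = (b + a*(1 - u - v*W))/(a+b) := by
    field_simp; ring
  rw [e2] at d2 d4 ⊢
  generalize hd : 1 - u - v*W = d at d1 d2 d3 d4 ⊢
  have hE2 : b + a*d ≠ 0 := by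
    intro h; apply d2; rw [h]; simp
  have e3 : 1 - t*a - t*b*(1/d) = ((1 - t*a)*d - t*b)/d := by field_simp
  have e4 : 1 - (t*(a+b) - b/a) - b/a*(1/((b + a*d)/(a+b)))
      = ((a+b)*a*((1 - t*a)*d - t*b))/(a*(b + a*d)) := by
    rw [one_div_div]
    field_simp
    ring
  rw [e3] at d3 ⊢
  rw [e4] at d4 ⊢
  have hN := (div_ne_zero_iff.mp d3).1
  have hM := (div_ne_zero_iff.mp d4).1
  rw [one_div_div, one_div_div]
  rw [show (1:K) + t*(a+b)*((a*(b + a*d))/((a+b)*a*((1 - t*a)*d - t*b)))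
      = ((a+b)*a*((1 - t*a)*d - t*b) + t*(a+b)*(a*(b + a*d)))
        /((a+b)*a*((1 - t*a)*d - t*b)) from by rw [add_div ((a+b)*a*((1 - t*a)*d - t*b)) _ _, div_self hM]; ring]
  rw [div_eq_div_iff hN hM]
  ring

lemma Jfrac_unf2 (n : ℕ) (z : ℕ → K) : Jfrac (n+2) z
    = 1/(1 - z 1 - z 2 * (1/(1 - z 3 - z 4 * Jfrac n (fun j => z (j+4))))) := by
  show 1/(1 - z 1 - z 2 * Jfrac (n+1) (fun i => z (i+2))) = _
  rw [Jfrac_succ]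

lemma key1 (n : ℕ) (x x' : ℕ → K) (pab : K)
    (h5 : ∀ j, 5 ≤ j → j ≤ 2*n+5 → x j = x' j)
    (hmid : ∀ W, W = Jfrac n (fun j => x (j+4)) →
       1/(1 - x 1 - x 2*(1/(1 - x 3 - x 4*W)))
         = 1 + pab*(1/(1 - x' 1 - x' 2*(1/(1 - x' 3 - x' 4*W))))) :
    Jfrac (n+2) x = 1 + pab * Jfrac (n+2) x' := by
  rw [Jfrac_unf2, Jfrac_unf2]
  rw [Jfrac_congr n (fun j => x' (j+4)) (fun j => x (j+4))
    (fun j h1 h2 => (h5 (j+4) (by omega) (by omega)).symm)]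
  exact hmid _ rfl

lemma key (n : ℕ) (x x' : ℕ → K) (pab : K)
    (h7 : ∀ j, 7 ≤ j → j ≤ 2*n+7 → x j = x' j)
    (h1 : x' 1 = x 1 + x 2) (h2 : x' 2 = x 2 * pab)
    (hmid : ∀ W, W = Jfrac n (fun j => x (j+6)) →
       1/(1 - x 3 - x 4*(1/(1 - x 5 - x 6*W)))
         = 1 + pab*(1/(1 - x' 3 - x' 4*(1/(1 - x' 5 - x' 6*W))))) :
    Jfrac (n+3) x = Jfrac (n+3) x' := by
  rw [show n+3 = (n+2)+1 from rfl, Jfrac_succ (n+2) x, Jfrac_succ (n+2) x']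
  have hk1 : Jfrac (n+2) (fun i => x (i+2)) = 1 + pab * Jfrac (n+2) (fun i => x' (i+2)) := by
    apply key1 n _ _ pab
    · intro j hj1 hj2; exact h7 (j+2) (by omega) (by omega)
    · intro W hW
      have eW : (fun j => (fun i => x (i+2)) (j+4)) = (fun j => x (j+6)) := by
        funext j; show x (j+4+2) = x (j+6); congr 1 <;> omega
      rw [eW] at hW
      exact hmid W hW
  rw [hk1, h1, h2]
  congr 1
  ring

section Evals
variable (r u j : ℕ) (t : K) (y : ℕ → K) (m : ℕ → ℤ)

lemma yhat_odd_flat (hj : j = 2*u-1) (hu : 1 ≤ u) (hur : u+1 ≤ r)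
    (hmm : m (u+1) = m u) : yhat r t y m j = t * y j := by
  subst hj; unfold yhat
  rw [if_pos (show (2*u-1) % 2 = 1 by omega)]
  simp only [show 2*u-1+1 = 2*u from by omega, show (2*u)/2 = u from by omega]
  rw [if_pos hur, if_neg (show ¬(m (u+1) = m u - 1) from by rw [hmm]; omega),
      if_neg (show ¬(m (u+1) = m u + 1) from by rw [hmm]; omega)]

lemma yhat_odd_up (hj : j = 2*u-1) (hu : 1 ≤ u) (hur : u+1 ≤ r)
    (hmm : m (u+1) = m u + 1) : yhat r t y m j = t * (y j + y (j+1)) := by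
  subst hj; unfold yhat
  rw [if_pos (show (2*u-1) % 2 = 1 by omega)]
  simp only [show 2*u-1+1 = 2*u from by omega, show (2*u)/2 = u from by omega]
  rw [if_pos hur, if_neg (show ¬(m (u+1) = m u - 1) from by rw [hmm]; omega), if_pos hmm]

lemma yhat_odd_down (hj : j = 2*u-1) (hu : 1 ≤ u) (hur : u+1 ≤ r)
    (hmm : m (u+1) = m u - 1) : yhat r t y m j = t * y j - y (j+1) / y (j+2) := by
  subst hj; unfold yhat
  rw [if_pos (show (2*u-1) % 2 = 1 by omega)]
  simp only [show 2*u-1+1 = 2*u from by omega, show (2*u)/2 = u from by omega]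
  rw [if_pos hur, if_pos hmm]

lemma yhat_odd_other (hj : j = 2*u-1) (hu : 1 ≤ u) (hur : u+1 ≤ r)
    (h1 : ¬(m (u+1) = m u - 1)) (h2 : ¬(m (u+1) = m u + 1)) : yhat r t y m j = t * y j := by
  subst hj; unfold yhat
  rw [if_pos (show (2*u-1) % 2 = 1 by omega)]
  simp only [show 2*u-1+1 = 2*u from by omega, show (2*u)/2 = u from by omega]
  rw [if_pos hur, if_neg h1, if_neg h2]

lemma yhat_odd_out (hj : j = 2*u-1) (hu : 1 ≤ u) (hur : ¬(u+1 ≤ r)) :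
    yhat r t y m j = t * y j := by
  subst hj; unfold yhat
  rw [if_pos (show (2*u-1) % 2 = 1 by omega)]
  simp only [show 2*u-1+1 = 2*u from by omega, show (2*u)/2 = u from by omega]
  rw [if_neg hur]

lemma yhat_even_in (hj : j = 2*u) (hu : 1 ≤ u) (hur : u+1 ≤ r) :
    yhat r t y m j = t * y j * (t * y (j+1)) ^ (m (u+1) - m u) := by
  subst hj; unfold yhat
  rw [if_neg (show ¬((2*u) % 2 = 1) by omega)]
  simp only [show (2*u)/2 = u from by omega]
  rw [if_pos hur]

lemma yhat_even_out (hj : j = 2*u) (hu : 1 ≤ u) (hur : ¬(u+1 ≤ r)) :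
    yhat r t y m j = t * y j := by
  subst hj; unfold yhat
  rw [if_neg (show ¬((2*u) % 2 = 1) by omega)]
  simp only [show (2*u)/2 = u from by omega]
  rw [if_neg hur]

end Evals

end Helpers

set_option maxHeartbeats 1600000 in
/-- Theorem 2.7 of Di Francesco–Kedem: invariance of the Jacobi continued fraction
`J^{(r)}(ŷ(m))` (and of `F_m(t) = 1 + t·y₁·J^{(r)}(ŷ(m))`) under mutations of the
Motzkin path `m` and the corresponding mutation of the weights `y`, in
case (i) (`m_{i+1} = m_i + 1`) and case (ii) (`m_{i+1} = m_i`),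
with `m_{i-1} = m_i` when `i ≥ 2`. -/
theorem stmt6 {K : Type*} [Field K] (r : ℕ) (hr : 2 ≤ r) (t : K) (y : ℕ → K)
    (m : ℕ → ℤ) (hm : ∀ j, 1 ≤ j → j ≤ r - 1 → |m (j + 1) - m j| ≤ 1)
    (i : ℕ) (hi1 : 1 ≤ i) (hi2 : i ≤ r - 1)
    (hcase : (m (i + 1) = m i + 1 ∨ m (i + 1) = m i) ∧ (2 ≤ i → m (i - 1) = m i))
    (m' : ℕ → ℤ) (hm' : m' = fun j => if j = i then m i + 1 else m j)
    (y' : ℕ → K)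
    (hy' : y' = fun j =>
      if j = 2 * i - 1 then y (2 * i - 1) + y (2 * i)
      else if j = 2 * i then y (2 * i + 1) * y (2 * i) / (y (2 * i - 1) + y (2 * i))
      else if j = 2 * i + 1 then y (2 * i + 1) * y (2 * i - 1) / (y (2 * i - 1) + y (2 * i))
      else if j = 2 * i + 2 ∧ m (i + 1) = m i then
        y (2 * i + 2) * y (2 * i - 1) / (y (2 * i - 1) + y (2 * i))
      else y j)
    -- genericity: every element inverted in forming ŷ(m), ŷ(m'), y' is nonzero
    (hgen1 : ∀ j, 1 ≤ j → j ≤ r - 1 → y (2 * j + 1) ≠ 0 ∧ t * y (2 * j + 1) ≠ 0)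
    (hgen1' : ∀ j, 1 ≤ j → j ≤ r - 1 → y' (2 * j + 1) ≠ 0 ∧ t * y' (2 * j + 1) ≠ 0)
    (hgen2 : y (2 * i - 1) + y (2 * i) ≠ 0)
    -- genericity: every denominator in the recursive evaluation of the fractions is nonzero
    (hgen3 : JfracGen r (yhat r t y m))
    (hgen4 : JfracGen r (yhat r t y' m')) :
    (2 ≤ i → Jfrac r (yhat r t y m) = Jfrac r (yhat r t y' m')) ∧
    (i = 1 → Jfrac r (yhat r t y m) = 1 + t * y' 1 * Jfrac r (yhat r t y' m')) ∧
    (2 ≤ i → 1 + t * y 1 * Jfrac r (yhat r t y m) = 1 + t * y' 1 * Jfrac r (yhat r t y' m')) ∧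
    (i = 1 → 1 + t * y 1 * Jfrac r (yhat r t y m) =
      1 + t * y 1 * (1 + t * y' 1 * Jfrac r (yhat r t y' m'))) := by
  obtain ⟨hcase12, hprev⟩ := hcase
  have hm'ne : ∀ x, x ≠ i → m' x = m x := fun x hx => by rw [hm']; exact if_neg hx
  have hm'i : m' i = m i + 1 := by rw [hm']; simp
  have hy'ne : ∀ x, x ≤ 2*i-2 ∨ 2*i+3 ≤ x → y' x = y x := by
    intro x hx
    rw [hy']
    beta_reduce
    rw [if_neg (show ¬(x = 2*i-1) by omega), if_neg (show ¬(x = 2*i) by omega),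
      if_neg (show ¬(x = 2*i+1) by omega),
      if_neg (show ¬(x = 2*i+2 ∧ m (i+1) = m i) from fun h => by omega)]
  have hy'a : y' (2*i-1) = y (2*i-1) + y (2*i) := by
    rw [hy']
    beta_reduce
    rw [if_pos rfl]
  have hy'b : y' (2*i) = y (2*i+1) * y (2*i) / (y (2*i-1) + y (2*i)) := by
    rw [hy']
    beta_reduce
    rw [if_neg (show ¬(2*i = 2*i-1) by omega), if_pos rfl]
  have hy'c : y' (2*i+1) = y (2*i+1) * y (2*i-1) / (y (2*i-1) + y (2*i)) := by
    rw [hy']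
    beta_reduce
    rw [if_neg (show ¬(2*i+1 = 2*i-1) by omega), if_neg (show ¬(2*i+1 = 2*i) by omega),
      if_pos rfl]
  have hc : y (2*i+1) ≠ 0 := (hgen1 i hi1 hi2).1
  have ht : t ≠ 0 := left_ne_zero_of_mul (hgen1 i hi1 hi2).2
  have hab := hgen2
  have ha : y (2*i-1) ≠ 0 := by
    have h := (hgen1' i hi1 hi2).1
    rw [hy'c] at h
    intro h0; rw [h0] at h; simp at h
  have htail : ∀ j, 2*i+3 ≤ j → yhat r t y m j = yhat r t y' m' j := by
    intro j hj
    have e1 := hm'ne ((j+1)/2+1) (by omega)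
    have e2 := hm'ne ((j+1)/2) (by omega)
    have e3 := hm'ne (j/2+1) (by omega)
    have e4 := hm'ne (j/2) (by omega)
    have f1 := hy'ne j (Or.inr (by omega))
    have f2 := hy'ne (j+1) (Or.inr (by omega))
    have f3 := hy'ne (j+2) (Or.inr (by omega))
    unfold yhat
    simp only [e1, e2, e3, e4, f1, f2, f3]
  have hur1 : i+1 ≤ r := by omega
  have hcore : ∀ W, W = Jfrac (r-i-1) (fun j => yhat r t y m (j + (2*i+2))) →
      1/(1 - yhat r t y m (2*i-1) - yhat r t y m (2*i) *
          (1/(1 - yhat r t y m (2*i+1) - yhat r t y m (2*i+2)*W)))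
      = 1 + t*(y (2*i-1) + y (2*i)) *
        (1/(1 - yhat r t y' m' (2*i-1) - yhat r t y' m' (2*i) *
          (1/(1 - yhat r t y' m' (2*i+1) - yhat r t y' m' (2*i+2)*W)))) := by
    intro W hW
    have hWW : Jfrac (r-i-1) (fun j => yhat r t y' m' (j+(2*i+2))) = W := by
      rw [hW]
      exact Jfrac_congr _ _ _ (fun j h1 h2 => (htail (j+(2*i+2)) (by omega)).symm)
    -- genericity extraction
    have g1 : JfracGen ((r-i-1)+1) (fun j => yhat r t y m (j + 2*i)) :=
      JfracGen_tail i ((r-i-1)+1) _ (by rw [show i + ((r-i-1)+1) = r from by omega]; exact hgen3)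
    obtain ⟨g1a, -⟩ := g1
    beta_reduce at g1a
    rw [show 1+2*i = 2*i+1 from by omega, show 2+2*i = 2*i+2 from by omega,
        show (fun j => yhat r t y m (j+2+2*i)) = (fun j => yhat r t y m (j+(2*i+2))) from
          by funext j; congr 1 <;> omega, ← hW] at g1a
    have g2 : JfracGen ((r-i-1)+1) (fun j => yhat r t y' m' (j + 2*i)) :=
      JfracGen_tail i ((r-i-1)+1) _ (by rw [show i + ((r-i-1)+1) = r from by omega]; exact hgen4)
    obtain ⟨g2a, -⟩ := g2
    beta_reduce at g2a
    rw [show 1+2*i = 2*i+1 from by omega, show 2+2*i = 2*i+2 from by omega,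
        show (fun j => yhat r t y' m' (j+2+2*i)) = (fun j => yhat r t y' m' (j+(2*i+2))) from
          by funext j; congr 1 <;> omega, hWW] at g2a
    have g3 : JfracGen ((r-i)+1) (fun j => yhat r t y m (j + 2*(i-1))) :=
      JfracGen_tail (i-1) ((r-i)+1) _ (by rw [show (i-1) + ((r-i)+1) = r from by omega]; exact hgen3)
    obtain ⟨g3a, -⟩ := g3
    beta_reduce at g3a
    rw [show r-i = (r-i-1)+1 from by omega, Jfrac_succ] at g3a
    beta_reduce at g3a
    rw [show 1+2*(i-1) = 2*i-1 from by omega, show 2+2*(i-1) = 2*i from by omega,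
        show 1+2+2*(i-1) = 2*i+1 from by omega, show 2+2+2*(i-1) = 2*i+2 from by omega,
        show (fun j => yhat r t y m (j+2+2+2*(i-1))) = (fun j => yhat r t y m (j+(2*i+2))) from
          by funext j; congr 1 <;> omega, ← hW] at g3a
    have g4 : JfracGen ((r-i)+1) (fun j => yhat r t y' m' (j + 2*(i-1))) :=
      JfracGen_tail (i-1) ((r-i)+1) _ (by rw [show (i-1) + ((r-i)+1) = r from by omega]; exact hgen4)
    obtain ⟨g4a, -⟩ := g4
    beta_reduce at g4a
    rw [show r-i = (r-i-1)+1 from by omega, Jfrac_succ] at g4a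
    beta_reduce at g4a
    rw [show 1+2*(i-1) = 2*i-1 from by omega, show 2+2*(i-1) = 2*i from by omega,
        show 1+2+2*(i-1) = 2*i+1 from by omega, show 2+2+2*(i-1) = 2*i+2 from by omega,
        show (fun j => yhat r t y' m' (j+2+2+2*(i-1))) = (fun j => yhat r t y' m' (j+(2*i+2))) from
          by funext j; congr 1 <;> omega, hWW] at g4a
    rcases hcase12 with hc1 | hc2
    · -- case (i)
      have V3 : yhat r t y m (2*i-1) = t*(y (2*i-1) + y (2*i)) := by
        rw [yhat_odd_up r i (2*i-1) t y m (by omega) hi1 hur1 hc1,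
            show 2*i-1+1 = 2*i from by omega]
      have V4 : yhat r t y m (2*i) = t*y (2*i)*(t*y (2*i+1)) := by
        rw [yhat_even_in r i (2*i) t y m rfl hi1 hur1,
            show m (i+1) - m i = (1:ℤ) from by rw [hc1]; ring, zpow_one]
      have V3' : yhat r t y' m' (2*i-1) = t*(y (2*i-1) + y (2*i)) := by
        rw [yhat_odd_flat r i (2*i-1) t y' m' (by omega) hi1 hur1
            (by rw [hm'ne (i+1) (by omega), hm'i, hc1]), hy'a]
      have V4' : yhat r t y' m' (2*i) = t*(y (2*i+1)*y (2*i)/(y (2*i-1)+y (2*i))) := by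
        rw [yhat_even_in r i (2*i) t y' m' rfl hi1 hur1,
            show m' (i+1) - m' i = (0:ℤ) from by rw [hm'ne (i+1) (by omega), hm'i, hc1]; ring,
            zpow_zero, mul_one, hy'b]
      have hy'd : y' (2*i+2) = y (2*i+2) := by
        rw [hy']
        beta_reduce
        rw [if_neg (show ¬(2*i+2 = 2*i-1) by omega), if_neg (show ¬(2*i+2 = 2*i) by omega),
            if_neg (show ¬(2*i+2 = 2*i+1) by omega),
            if_neg (show ¬(2*i+2 = 2*i+2 ∧ m (i+1) = m i) from fun h => by
              rw [hc1] at h; omega)]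
      have V5 : yhat r t y' m' (2*i+1)
          = yhat r t y m (2*i+1) - t*y (2*i+1)*y (2*i)/(y (2*i-1)+y (2*i)) := by
        by_cases hur2 : (i+1)+1 ≤ r
        · have hf : y (2*i+3) ≠ 0 := by
            have := (hgen1 (i+1) (by omega) (by omega)).1
            rwa [show 2*(i+1)+1 = 2*i+3 from by omega] at this
          have em2 : m' (i+1+1) = m (i+1+1) := hm'ne (i+1+1) (by omega)
          have em1 : m' (i+1) = m (i+1) := hm'ne (i+1) (by omega)
          by_cases hd1 : m (i+1+1) = m (i+1) - 1
          · rw [yhat_odd_down r (i+1) (2*i+1) t y m (by omega) (by omega) hur2 hd1,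
                yhat_odd_down r (i+1) (2*i+1) t y' m' (by omega) (by omega) hur2
                  (by rw [em2, em1]; exact hd1),
                show 2*i+1+1 = 2*i+2 from by omega, show 2*i+1+2 = 2*i+3 from by omega,
                hy'c, hy'd, hy'ne (2*i+3) (Or.inr (by omega))]
            field_simp
            ring
          · by_cases hd2 : m (i+1+1) = m (i+1) + 1
            · rw [yhat_odd_up r (i+1) (2*i+1) t y m (by omega) (by omega) hur2 hd2,
                  yhat_odd_up r (i+1) (2*i+1) t y' m' (by omega) (by omega) hur2
                    (by rw [em2, em1]; exact hd2),
                  show 2*i+1+1 = 2*i+2 from by omega, hy'c, hy'd]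
              field_simp
              ring
            · rw [yhat_odd_other r (i+1) (2*i+1) t y m (by omega) (by omega) hur2 hd1 hd2,
                  yhat_odd_other r (i+1) (2*i+1) t y' m' (by omega) (by omega) hur2
                    (by rw [em2, em1]; exact hd1) (by rw [em2, em1]; exact hd2), hy'c]
              field_simp
              ring
        · rw [yhat_odd_out r (i+1) (2*i+1) t y m (by omega) (by omega) hur2,
              yhat_odd_out r (i+1) (2*i+1) t y' m' (by omega) (by omega) hur2, hy'c]
          field_simp
          ring
      have V6 : yhat r t y' m' (2*i+2) = yhat r t y m (2*i+2) := by
        by_cases hur2 : (i+1)+1 ≤ r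
        · rw [yhat_even_in r (i+1) (2*i+2) t y m (by omega) (by omega) hur2,
              yhat_even_in r (i+1) (2*i+2) t y' m' (by omega) (by omega) hur2,
              hm'ne (i+1+1) (by omega), hm'ne (i+1) (by omega), hy'd,
              show 2*i+2+1 = 2*i+3 from by omega, hy'ne (2*i+3) (Or.inr (by omega))]
        · rw [yhat_even_out r (i+1) (2*i+2) t y m (by omega) (by omega) hur2,
              yhat_even_out r (i+1) (2*i+2) t y' m' (by omega) (by omega) hur2, hy'd]
      rw [V5, V6] at g2a
      rw [V3', V4', V5, V6] at g4a
      rw [V3, V4] at g3a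
      rw [V3, V4, V3', V4', V5, V6]
      exact core_i t (y (2*i-1)) (y (2*i)) (y (2*i+1))
        (yhat r t y m (2*i+1)) (yhat r t y m (2*i+2)) W hab g1a g2a g3a g4a
    · -- case (ii)
      have V3 : yhat r t y m (2*i-1) = t*y (2*i-1) := by
        rw [yhat_odd_other r i (2*i-1) t y m (by omega) hi1 hur1
            (by rw [hc2]; omega) (by rw [hc2]; omega)]
      have V4 : yhat r t y m (2*i) = t*y (2*i) := by
        rw [yhat_even_in r i (2*i) t y m rfl hi1 hur1,
            show m (i+1) - m i = (0:ℤ) from by rw [hc2]; ring, zpow_zero, mul_one]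
      have V3' : yhat r t y' m' (2*i-1)
          = t*(y (2*i-1)+y (2*i)) - y (2*i)/y (2*i-1) := by
        rw [yhat_odd_down r i (2*i-1) t y' m' (by omega) hi1 hur1
            (by rw [hm'ne (i+1) (by omega), hm'i]; omega),
            show 2*i-1+1 = 2*i from by omega, show 2*i-1+2 = 2*i+1 from by omega,
            hy'a, hy'b, hy'c]
        congr 1
        field_simp
      have V4' : yhat r t y' m' (2*i) = y (2*i)/y (2*i-1) := by
        rw [yhat_even_in r i (2*i) t y' m' rfl hi1 hur1,
            show m' (i+1) - m' i = (-1:ℤ) from by rw [hm'ne (i+1) (by omega), hm'i]; omega,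
            zpow_neg_one, hy'b, hy'c]
        field_simp
      have hy'd : y' (2*i+2) = y (2*i+2)*y (2*i-1)/(y (2*i-1)+y (2*i)) := by
        rw [hy']
        beta_reduce
        rw [if_neg (show ¬(2*i+2 = 2*i-1) by omega), if_neg (show ¬(2*i+2 = 2*i) by omega),
            if_neg (show ¬(2*i+2 = 2*i+1) by omega), if_pos ⟨rfl, hc2⟩]
      have V5 : yhat r t y' m' (2*i+1)
          = y (2*i-1)/(y (2*i-1)+y (2*i)) * yhat r t y m (2*i+1) := by
        by_cases hur2 : (i+1)+1 ≤ r
        · have hf : y (2*i+3) ≠ 0 := by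
            have := (hgen1 (i+1) (by omega) (by omega)).1
            rwa [show 2*(i+1)+1 = 2*i+3 from by omega] at this
          have em2 : m' (i+1+1) = m (i+1+1) := hm'ne (i+1+1) (by omega)
          have em1 : m' (i+1) = m (i+1) := hm'ne (i+1) (by omega)
          by_cases hd1 : m (i+1+1) = m (i+1) - 1
          · rw [yhat_odd_down r (i+1) (2*i+1) t y m (by omega) (by omega) hur2 hd1,
                yhat_odd_down r (i+1) (2*i+1) t y' m' (by omega) (by omega) hur2
                  (by rw [em2, em1]; exact hd1),
                show 2*i+1+1 = 2*i+2 from by omega, show 2*i+1+2 = 2*i+3 from by omega,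
                hy'c, hy'd, hy'ne (2*i+3) (Or.inr (by omega))]
            field_simp
          · by_cases hd2 : m (i+1+1) = m (i+1) + 1
            · rw [yhat_odd_up r (i+1) (2*i+1) t y m (by omega) (by omega) hur2 hd2,
                  yhat_odd_up r (i+1) (2*i+1) t y' m' (by omega) (by omega) hur2
                    (by rw [em2, em1]; exact hd2),
                  show 2*i+1+1 = 2*i+2 from by omega, hy'c, hy'd]
              field_simp
            · rw [yhat_odd_other r (i+1) (2*i+1) t y m (by omega) (by omega) hur2 hd1 hd2,
                  yhat_odd_other r (i+1) (2*i+1) t y' m' (by omega) (by omega) hur2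
                    (by rw [em2, em1]; exact hd1) (by rw [em2, em1]; exact hd2), hy'c]
              field_simp
        · rw [yhat_odd_out r (i+1) (2*i+1) t y m (by omega) (by omega) hur2,
              yhat_odd_out r (i+1) (2*i+1) t y' m' (by omega) (by omega) hur2, hy'c]
          field_simp
      have V6 : yhat r t y' m' (2*i+2)
          = y (2*i-1)/(y (2*i-1)+y (2*i)) * yhat r t y m (2*i+2) := by
        by_cases hur2 : (i+1)+1 ≤ r
        · rw [yhat_even_in r (i+1) (2*i+2) t y m (by omega) (by omega) hur2,
              yhat_even_in r (i+1) (2*i+2) t y' m' (by omega) (by omega) hur2,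
              hm'ne (i+1+1) (by omega), hm'ne (i+1) (by omega), hy'd,
              show 2*i+2+1 = 2*i+3 from by omega, hy'ne (2*i+3) (Or.inr (by omega))]
          generalize (t * y (2*i+3)) ^ (m (i+1+1) - m (i+1)) = P
          field_simp
        · rw [yhat_even_out r (i+1) (2*i+2) t y m (by omega) (by omega) hur2,
              yhat_even_out r (i+1) (2*i+2) t y' m' (by omega) (by omega) hur2, hy'd]
          field_simp
      rw [V5, V6] at g2a
      rw [V3', V4', V5, V6] at g4a
      rw [V3, V4] at g3a
      rw [V3, V4, V3', V4', V5, V6]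
      exact core_ii t (y (2*i-1)) (y (2*i))
        (yhat r t y m (2*i+1)) (yhat r t y m (2*i+2)) W ha hab g1a g2a g3a g4a
  have main2 : 2 ≤ i → Jfrac r (yhat r t y m) = Jfrac r (yhat r t y' m') := by
    intro h2
    have hpm := hprev h2
    have V1 : yhat r t y m (2*i-3) = t * y (2*i-3) := by
      rw [yhat_odd_other r (i-1) (2*i-3) t y m (by omega) (by omega) (by omega)
          (by rw [show i-1+1 = i from by omega]; omega)
          (by rw [show i-1+1 = i from by omega]; omega)]
    have V2 : yhat r t y m (2*i-2) = t * y (2*i-2) := by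
      rw [yhat_even_in r (i-1) (2*i-2) t y m (by omega) (by omega) (by omega),
          show i-1+1 = i from by omega,
          show m i - m (i-1) = (0:ℤ) from by omega, zpow_zero, mul_one]
    have V1' : yhat r t y' m' (2*i-3) = t * (y (2*i-3) + y (2*i-2)) := by
      rw [yhat_odd_up r (i-1) (2*i-3) t y' m' (by omega) (by omega) (by omega)
          (by rw [show i-1+1 = i from by omega, hm'i, hm'ne (i-1) (by omega)]; omega),
          show 2*i-3+1 = 2*i-2 from by omega,
          hy'ne (2*i-3) (Or.inl (by omega)), hy'ne (2*i-2) (Or.inl (by omega))]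
    have V2' : yhat r t y' m' (2*i-2) = t * y (2*i-2) * (t*(y (2*i-1) + y (2*i))) := by
      rw [yhat_even_in r (i-1) (2*i-2) t y' m' (by omega) (by omega) (by omega),
          show i-1+1 = i from by omega,
          show m' i - m' (i-1) = (1:ℤ) from by rw [hm'i, hm'ne (i-1) (by omega)]; omega,
          zpow_one, show 2*i-2+1 = 2*i-1 from by omega, hy'a,
          hy'ne (2*i-2) (Or.inl (by omega))]
    have hpre : ∀ j, 1 ≤ j → j ≤ 2*(i-2) → yhat r t y m j = yhat r t y' m' j := by
      intro j hj1 hj2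
      have e1 := hm'ne ((j+1)/2+1) (by omega)
      have e2 := hm'ne ((j+1)/2) (by omega)
      have e3 := hm'ne (j/2+1) (by omega)
      have e4 := hm'ne (j/2) (by omega)
      have f1 := hy'ne j (Or.inl (by omega))
      have f2 := hy'ne (j+1) (Or.inl (by omega))
      have f3 := hy'ne (j+2) (Or.inl (by omega))
      unfold yhat
      simp only [e1, e2, e3, e4, f1, f2, f3]
    have htl : Jfrac ((r-i-1)+3) (fun j => yhat r t y m (j+2*(i-2)))
        = Jfrac ((r-i-1)+3) (fun j => yhat r t y' m' (j+2*(i-2))) := by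
      apply key (r-i-1) _ _ (t*(y (2*i-1)+y (2*i)))
      · intro j hj1 hj2; exact htail (j+2*(i-2)) (by omega)
      · show yhat r t y' m' (1+2*(i-2)) = yhat r t y m (1+2*(i-2)) + yhat r t y m (2+2*(i-2))
        rw [show 1+2*(i-2) = 2*i-3 from by omega, show 2+2*(i-2) = 2*i-2 from by omega,
            V1, V2, V1']
        ring
      · show yhat r t y' m' (2+2*(i-2))
            = yhat r t y m (2+2*(i-2)) * (t*(y (2*i-1)+y (2*i)))
        rw [show 2+2*(i-2) = 2*i-2 from by omega, V2, V2']
      · intro W hW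
        have hW2 : W = Jfrac (r-i-1) (fun j => yhat r t y m (j+(2*i+2))) := by
          rw [hW]; congr 1; funext j; congr 1; omega
        show 1/(1 - yhat r t y m (3+2*(i-2)) - yhat r t y m (4+2*(i-2)) *
              (1/(1 - yhat r t y m (5+2*(i-2)) - yhat r t y m (6+2*(i-2))*W)))
          = 1 + (t*(y (2*i-1)+y (2*i))) *
            (1/(1 - yhat r t y' m' (3+2*(i-2)) - yhat r t y' m' (4+2*(i-2)) *
              (1/(1 - yhat r t y' m' (5+2*(i-2)) - yhat r t y' m' (6+2*(i-2))*W))))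
        rw [show 3+2*(i-2) = 2*i-1 from by omega, show 4+2*(i-2) = 2*i from by omega,
            show 5+2*(i-2) = 2*i+1 from by omega, show 6+2*(i-2) = 2*i+2 from by omega]
        exact hcore W hW2
    have hfin := Jfrac_peel (i-2) ((r-i-1)+3) (yhat r t y m) (yhat r t y' m') hpre htl
    rwa [show (i-2) + ((r-i-1)+3) = r from by omega] at hfin
  have main1 : i = 1 → Jfrac r (yhat r t y m)
      = 1 + t * y' 1 * Jfrac r (yhat r t y' m') := by
    intro h1
    subst h1
    have hy1 : y' 1 = y (2*1-1) + y (2*1) := hy'a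
    have cal : Jfrac ((r-2)+2) (yhat r t y m)
        = 1 + (t*(y (2*1-1) + y (2*1))) * Jfrac ((r-2)+2) (yhat r t y' m') := by
      apply key1 (r-2) _ _ _
      · intro j hj1 hj2; exact htail j (by omega)
      · intro W hW
        have hW2 : W = Jfrac (r-1-1) (fun j => yhat r t y m (j+(2*1+2))) := by
          rw [hW, show r-1-1 = r-2 from by omega]
        exact hcore W hW2
    rw [show (r-2)+2 = r from by omega] at cal
    rw [hy1]
    exact cal
  refine ⟨main2, main1, fun h2 => ?_, fun h1 => ?_⟩
  · rw [main2 h2, hy'ne 1 (Or.inl (by omega))]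
  · rw [main1 h1]
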